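/- Let F be a forest on n \ge 1 vertices in which every vertex of degree at most 1 belongs to a distinguished set B of t vertices, and every vertex of degree 2 outside B has both neighbors in B. Then n \le 3t - 3 (for t \ge 2). -/
import Mathlib

open SimpleGraph Finset

private lemma myAcyclic_mono {V : Type*} {G H : SimpleGraph V} (hle : G ≤ H)
    (hH : H.IsAcyclic) : G.IsAcyclic :=
  fun _ c hc => hH (Walk.mapLe hle c) (hc.mapLe hle)

private lemma my_exists_leaf {V : Type*} [Fintype V] [DecidableEq V] (G : SimpleGraph V)
    [DecidableRel G.Adj] (hG : G.IsAcyclic) {x y : V} (hxy : G.Adj x y) :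
    ∃ v, G.degree v = 1 := by
  classical
  set P : ℕ → Prop := fun n => ∃ (v u : V) (p : G.Walk v u), p.IsPath ∧ p.length = n with hP
  have hbd : ∀ m, P m → m ≤ Fintype.card V := by
    rintro m ⟨v, u, p, hp, rfl⟩
    exact hp.length_lt.le
  have hP1 : P 1 := ⟨x, y, Walk.cons hxy Walk.nil, by simp [Walk.cons_isPath_iff, hxy.ne], rfl⟩
  set N := Nat.findGreatest P (Fintype.card V) with hN
  have hPN : P N := Nat.findGreatest_spec (hbd 1 hP1) hP1
  have hmax : ∀ m, P m → m ≤ N := by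
    intro m hm
    by_contra hlt
    exact Nat.findGreatest_is_greatest (not_le.mp hlt) (hbd m hm) hm
  have hN1 : 1 ≤ N := Nat.le_findGreatest (hbd 1 hP1) hP1
  obtain ⟨v, u, p, hp, hl⟩ := hPN
  cases p with
  | nil => simp at hl; omega
  | @cons _ w0 _ hadj q =>
    refine ⟨v, ?_⟩
    have hq : q.IsPath ∧ v ∉ q.support := by
      rw [Walk.cons_isPath_iff] at hp; exact hp
    have h1 : 0 < G.degree v := by
      rw [degree_pos_iff_exists_adj]; exact ⟨w0, hadj⟩
    have h2 : ¬ 1 < G.degree v := by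
      intro hdeg
      rw [degree] at hdeg
      obtain ⟨w, hwmem, hwne⟩ := Finset.exists_mem_ne hdeg w0
      have hw : G.Adj v w := (mem_neighborFinset G v w).mp hwmem
      by_cases hws : w ∈ (Walk.cons hadj q).support
      · -- cycle
        rw [Walk.support_cons] at hws
        have hwq : w ∈ q.support := by
          cases List.mem_cons.mp hws with
          | inl h => exact absurd h.symm hw.ne
          | inr h => exact h
        have hr : (q.takeUntil w hwq).IsPath := hq.1.takeUntil hwq
        have hvr : v ∉ (q.takeUntil w hwq).support :=
          fun h => hq.2 (Walk.support_takeUntil_subset q hwq h)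
        have hc : (Walk.cons hw.symm (Walk.cons hadj (q.takeUntil w hwq))).IsCycle := by
          rw [Walk.cons_isCycle_iff]
          constructor
          · rw [Walk.cons_isPath_iff]; exact ⟨hr, hvr⟩
          · rw [Walk.edges_cons]
            intro hmem
            cases List.mem_cons.mp hmem with
            | inl h =>
              rcases Sym2.eq_iff.mp h with ⟨h1', h2'⟩ | ⟨h1', h2'⟩
              · exact hw.ne' h1'
              · exact hwne h1'
            | inr h => exact hvr (Walk.snd_mem_support_of_mem_edges _ h)
        exact absurd hc (hG _)
      · -- extend
        have hext : (Walk.cons hw.symm (Walk.cons hadj q)).IsPath := by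
          rw [Walk.cons_isPath_iff]; exact ⟨hp, hws⟩
        have := hmax ((Walk.cons hadj q).length + 1)
          ⟨w, u, Walk.cons hw.symm (Walk.cons hadj q), hext, by rw [Walk.length_cons]⟩
        omega
    omega

private lemma my_forest_bound : ∀ (k : ℕ) {V : Type*} [Fintype V] [DecidableEq V]
    (G : SimpleGraph V) [DecidableRel G.Adj], G.IsAcyclic → G.edgeFinset.card = k →
    G.edgeFinset.Nonempty →
    k + 1 ≤ (Finset.univ.filter fun v => 0 < G.degree v).card := by
  intro k
  induction k using Nat.strong_induction_on with
  | _ k IH =>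
    intro V _ _ G _ hG hk hne
    classical
    obtain ⟨e, he⟩ := hne
    induction e using Sym2.ind with
    | _ x y =>
    have hxy : G.Adj x y := (mem_edgeFinset.mp he)
    obtain ⟨v, hv1⟩ := my_exists_leaf G hG hxy
    obtain ⟨u, hu⟩ := Finset.card_eq_one.mp (by rw [← hv1]; rfl :
      (G.neighborFinset v).card = 1)
    have hadj : G.Adj v u := by
      rw [← mem_neighborFinset, hu]; exact Finset.mem_singleton_self u
    set G' := G.deleteEdges {s(v, u)} with hG'
    haveI : DecidableRel G'.Adj := fun a b =>
      decidable_of_iff (G.Adj a b ∧ ¬ s(a, b) = s(v, u)) (by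
        rw [hG', deleteEdges_adj]; simp)
    have hle : G' ≤ G := deleteEdges_le _
    have hacy : G'.IsAcyclic := myAcyclic_mono hle hG
    have hedge : G'.edgeFinset = G.edgeFinset.erase s(v, u) := by
      ext f
      simp only [mem_edgeFinset, hG', edgeSet_deleteEdges, Set.mem_diff, Finset.mem_erase,
        Set.mem_singleton_iff]
      tauto
    have hmemvu : s(v, u) ∈ G.edgeFinset := mem_edgeFinset.mpr hadj
    have hcard' : G'.edgeFinset.card = k - 1 := by
      rw [hedge, Finset.card_erase_of_mem hmemvu, hk]
    have hk1 : 1 ≤ k := by rw [← hk]; exact Finset.card_pos.mpr ⟨_, he⟩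
    -- degrees
    have hdegle : ∀ w, G'.degree w ≤ G.degree w := fun w =>
      Finset.card_le_card (fun a ha =>
        (mem_neighborFinset G w a).mpr (hle ((mem_neighborFinset G' w a).mp ha)))
    have hdegv : G'.degree v = 0 := by
      rw [degree, Finset.card_eq_zero]
      ext w
      simp only [mem_neighborFinset, hG', deleteEdges_adj, Set.mem_singleton_iff,
        Finset.notMem_empty, iff_false]
      rintro ⟨haw, hne⟩
      have : w ∈ G.neighborFinset v := (mem_neighborFinset G v w).mpr haw
      rw [hu, Finset.mem_singleton] at this
      exact hne (by rw [this])
    have hvS : v ∈ filter (fun w => 0 < G.degree w) univ := by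
      simp only [Finset.mem_filter, Finset.mem_univ, true_and, hv1]
      omega
    have hsub : filter (fun w => 0 < G'.degree w) univ ⊆
        (filter (fun w => 0 < G.degree w) univ).erase v := by
      intro w hw
      rw [Finset.mem_filter] at hw
      rw [Finset.mem_erase, Finset.mem_filter]
      refine ⟨?_, Finset.mem_univ w, lt_of_lt_of_le hw.2 (hdegle w)⟩
      rintro rfl
      rw [hdegv] at hw
      exact absurd hw.2 (lt_irrefl 0)
    have hScard : (filter (fun w => 0 < G'.degree w) univ).card + 1 ≤
        (filter (fun w => 0 < G.degree w) univ).card := by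
      have h1 := Finset.card_le_card hsub
      rw [Finset.card_erase_of_mem hvS] at h1
      have hvpos : 0 < (filter (fun w => 0 < G.degree w) univ).card :=
        Finset.card_pos.mpr ⟨v, hvS⟩
      omega
    by_cases hne' : G'.edgeFinset.Nonempty
    · have h2 := IH (k - 1) (by omega) G' hacy hcard' hne'
      omega
    · have h0 : G'.edgeFinset.card = 0 := by
        rw [Finset.card_eq_zero]
        exact Finset.not_nonempty_iff_eq_empty.mp hne'
      have hk1' : k = 1 := by omega
      have huS : u ∈ filter (fun w => 0 < G.degree w) univ := by
        simp only [Finset.mem_filter, Finset.mem_univ, true_and]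
        rw [degree_pos_iff_exists_adj]
        exact ⟨v, hadj.symm⟩
      have h2 : 2 ≤ (filter (fun w => 0 < G.degree w) univ).card := by
        have hsub2 : ({v, u} : Finset _) ⊆ filter (fun w => 0 < G.degree w) univ := by
          intro w hw
          rcases Finset.mem_insert.mp hw with rfl | hw
          · exact hvS
          · rw [Finset.mem_singleton] at hw; rw [hw]; exact huS
        calc 2 = ({v, u} : Finset _).card := (Finset.card_pair hadj.ne).symm
          _ ≤ _ := Finset.card_le_card hsub2
      omega

/-- Let `F` be a forest on `n ≥ 1` vertices with a distinguished boundary set `B` of `t`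
vertices, such that every vertex of degree at most `1` lies in `B`, and every vertex of
degree `2` outside `B` has both neighbors in `B`. Then for `t ≥ 2`, `n ≤ 3t - 3`. -/
theorem stmt18 {V : Type*} [Fintype V] [DecidableEq V] (F : SimpleGraph V)
    [DecidableRel F.Adj] (hF : F.IsAcyclic) (B : Finset V) (t : ℕ)
    (hB : B.card = t) (ht : 2 ≤ t) (hn : 1 ≤ Fintype.card V)
    (hdeg1 : ∀ v, F.degree v ≤ 1 → v ∈ B)
    (hdeg2 : ∀ v, v ∉ B → F.degree v = 2 → ∀ w, F.Adj v w → w ∈ B) :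
    Fintype.card V ≤ 3 * t - 3 := by
  classical
  by_cases hS : (Finset.univ.filter fun v => 0 < F.degree v).Nonempty
  case neg =>
    -- all degrees are zero, so every vertex is in B
    have hall : (Finset.univ : Finset V) ⊆ B := by
      intro v _
      apply hdeg1
      by_contra hdv
      exact hS ⟨v, by simp only [Finset.mem_filter, Finset.mem_univ, true_and]; omega⟩
    have := Finset.card_le_card hall
    rw [Finset.card_univ, hB] at this
    omega
  case pos =>
    -- there is an edge
    obtain ⟨v0, hv0⟩ := hS
    rw [Finset.mem_filter, degree_pos_iff_exists_adj] at hv0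
    obtain ⟨_, w0, hvw0⟩ := hv0
    have hEne : F.edgeFinset.Nonempty := ⟨s(v0, w0), mem_edgeFinset.mpr hvw0⟩
    -- main quantities
    have hSum : ∑ v : V, F.degree v = 2 * F.edgeFinset.card :=
      F.sum_degrees_eq_twice_card_edges
    have hedgebd := my_forest_bound F.edgeFinset.card F hF rfl hEne
    -- l0 + S.card = n
    have hl0S : (Finset.univ.filter fun v : V => F.degree v = 0).card +
        (Finset.univ.filter fun v : V => 0 < F.degree v).card = Fintype.card V := by
      have heq : (Finset.univ.filter fun v : V => 0 < F.degree v) =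
          Finset.univ.filter (fun v : V => ¬ F.degree v = 0) := by
        apply Finset.filter_congr
        intro v _
        simp [Nat.pos_iff_ne_zero]
      rw [heq, Finset.card_filter_add_card_filter_not, Finset.card_univ]
    -- Sum + 2 ≤ 2 * S.card
    have hSumS : (∑ v : V, F.degree v) + 2 ≤
        2 * (Finset.univ.filter fun v : V => 0 < F.degree v).card := by
      omega
    -- partition of Bᶜ
    have hsplit : ∑ v ∈ Bᶜ, F.degree v =
        (∑ v ∈ Bᶜ.filter (fun v => F.degree v = 2), F.degree v) +
        (∑ v ∈ Bᶜ.filter (fun v => ¬ F.degree v = 2), F.degree v) :=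
      (Finset.sum_filter_add_sum_filter_not _ _ _).symm
    have htotal : (∑ v ∈ B, F.degree v) + (∑ v ∈ Bᶜ, F.degree v) = ∑ v : V, F.degree v :=
      Finset.sum_add_sum_compl B _
    -- D2 sum
    have hD2sum : ∑ v ∈ Bᶜ.filter (fun v => F.degree v = 2), F.degree v =
        2 * (Bᶜ.filter (fun v => F.degree v = 2)).card := by
      rw [Finset.sum_congr rfl (fun v hv => (Finset.mem_filter.mp hv).2)]
      rw [Finset.sum_const, smul_eq_mul, mul_comm]
    -- D3 sum
    have hD3sum : 3 * (Bᶜ.filter (fun v => ¬ F.degree v = 2)).card ≤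
        ∑ v ∈ Bᶜ.filter (fun v => ¬ F.degree v = 2), F.degree v := by
      rw [mul_comm, ← smul_eq_mul]
      apply Finset.card_nsmul_le_sum
      intro v hv
      rw [Finset.mem_filter, Finset.mem_compl] at hv
      have h1 : ¬ F.degree v ≤ 1 := fun h => hv.1 (hdeg1 v h)
      omega
    -- cardinalities: a + d = n - t
    have hcards : (Bᶜ.filter (fun v => F.degree v = 2)).card +
        (Bᶜ.filter (fun v => ¬ F.degree v = 2)).card + t = Fintype.card V := by
      rw [Finset.card_filter_add_card_filter_not, Finset.card_compl, hB]
      have hle : t ≤ Fintype.card V := by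
        rw [← hB, ← Finset.card_univ]
        exact Finset.card_le_card (Finset.subset_univ B)
      omega
    -- SB ≥ 2a : double counting
    have hSB2a : 2 * (Bᶜ.filter (fun v => F.degree v = 2)).card ≤ ∑ b ∈ B, F.degree b := by
      have step1 : ∀ b, ((Bᶜ.filter (fun v => F.degree v = 2)).filter
          (fun d => F.Adj b d)).card ≤ F.degree b := by
        intro b
        rw [degree, neighborFinset_eq_filter]
        apply Finset.card_le_card
        intro d hd
        rw [Finset.mem_filter] at hd ⊢
        exact ⟨Finset.mem_univ d, hd.2⟩
      have swap : ∑ b ∈ B, ((Bᶜ.filter (fun v => F.degree v = 2)).filter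
          (fun d => F.Adj b d)).card =
          ∑ d ∈ Bᶜ.filter (fun v => F.degree v = 2), (B.filter (fun b => F.Adj d b)).card := by
        simp only [Finset.card_filter]
        rw [Finset.sum_comm]
        apply Finset.sum_congr rfl
        intro d _
        apply Finset.sum_congr rfl
        intro b _
        congr 1
        rw [adj_comm]
      have inner : ∀ d ∈ Bᶜ.filter (fun v => F.degree v = 2),
          (B.filter (fun b => F.Adj d b)).card = 2 := by
        intro d hd
        rw [Finset.mem_filter, Finset.mem_compl] at hd
        have : B.filter (fun b => F.Adj d b) = F.neighborFinset d := by
          ext w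
          rw [Finset.mem_filter, mem_neighborFinset]
          exact ⟨fun h => h.2, fun h => ⟨hdeg2 d hd.1 hd.2 w h, h⟩⟩
        rw [this]
        exact hd.2
      calc 2 * (Bᶜ.filter (fun v => F.degree v = 2)).card
          = ∑ d ∈ Bᶜ.filter (fun v => F.degree v = 2), (B.filter (fun b => F.Adj d b)).card := by
            rw [Finset.sum_congr rfl inner, Finset.sum_const, smul_eq_mul, mul_comm]
        _ = ∑ b ∈ B, ((Bᶜ.filter (fun v => F.degree v = 2)).filter (fun d => F.Adj b d)).card :=
            swap.symm
        _ ≤ ∑ b ∈ B, F.degree b := Finset.sum_le_sum (fun b _ => step1 b)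
    -- SB ≥ l1
    have hSBl1 : (Finset.univ.filter fun v : V => F.degree v = 1).card ≤ ∑ b ∈ B, F.degree b := by
      have hsub : (Finset.univ.filter fun v : V => F.degree v = 1) ⊆ B := by
        intro v hv
        rw [Finset.mem_filter] at hv
        exact hdeg1 v (by omega)
      calc (Finset.univ.filter fun v : V => F.degree v = 1).card
          = ∑ v ∈ Finset.univ.filter (fun v : V => F.degree v = 1), F.degree v := by
            rw [Finset.sum_congr rfl (fun v hv => (Finset.mem_filter.mp hv).2),
              Finset.sum_const, smul_eq_mul, mul_one]
        _ ≤ ∑ b ∈ B, F.degree b := Finset.sum_le_sum_of_subset hsub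
    -- l0 + l1 ≤ t
    have hl0l1 : (Finset.univ.filter fun v : V => F.degree v = 0).card +
        (Finset.univ.filter fun v : V => F.degree v = 1).card ≤ t := by
      have hdisj : Disjoint (Finset.univ.filter fun v : V => F.degree v = 0)
          (Finset.univ.filter fun v : V => F.degree v = 1) := by
        rw [Finset.disjoint_left]
        intro v h0 h1
        rw [Finset.mem_filter] at h0 h1
        omega
      rw [← Finset.card_union_of_disjoint hdisj, ← hB]
      apply Finset.card_le_card
      intro v hv
      rw [Finset.mem_union, Finset.mem_filter, Finset.mem_filter] at hv
      apply hdeg1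
      omega
    -- 1 ≤ 2*l0 + l1
    have hlow : 1 ≤ 2 * (Finset.univ.filter fun v : V => F.degree v = 0).card +
        (Finset.univ.filter fun v : V => F.degree v = 1).card := by
      by_contra hcon
      push_neg at hcon
      have h0 : ∀ v : V, 2 ≤ F.degree v := by
        intro v
        by_contra hv
        have : F.degree v = 0 ∨ F.degree v = 1 := by omega
        rcases this with h | h
        · have : v ∈ Finset.univ.filter (fun v : V => F.degree v = 0) := by
            simp [h]
          have := Finset.card_pos.mpr ⟨v, this⟩
          omega
        · have : v ∈ Finset.univ.filter (fun v : V => F.degree v = 1) := by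
            simp [h]
          have := Finset.card_pos.mpr ⟨v, this⟩
          omega
      have hsum2 : 2 * Fintype.card V ≤ ∑ v : V, F.degree v := by
        rw [← Finset.card_univ, mul_comm, ← smul_eq_mul]
        exact Finset.card_nsmul_le_sum _ _ _ (fun v _ => h0 v)
      have hle : (Finset.univ.filter fun v : V => 0 < F.degree v).card ≤ Fintype.card V := by
        rw [← Finset.card_univ]
        exact Finset.card_le_card (Finset.filter_subset _ _)
      omega
    omega
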